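/- Let α be a complex number with Re(α) > −1/2, let u_0^{(α)} : ℂ[x] → ℂ be the linear functional with u_0^{(α)}(P_k(·;α)) = δ_{0,k} for all k, and let u_0^{(α+1)} be the linear functional with u_0^{(α+1)}(P_k(·;α+1)) = δ_{0,k} for all k. Then for every polynomial f ∈ ℂ[x], u_0^{(α)}( x·f(x) ) = (α² / (2α+1)) u_0^{(α+1)}( f ). -/

import Mathlib

open Polynomial

/-- The polynomials `p_n(x; α)` defined recursively by
`p_0 = 1`, `p_{n+1} = x² p_n'' − x(2x − 1 − 2α) p_n' − ((2α+1)x − α²) p_n`. -/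
noncomputable def pseq (α : ℂ) : ℕ → ℂ[X]
  | 0 => 1
  | n + 1 =>
      X ^ 2 * derivative (derivative (pseq α n))
        - X * (2 * X - C (1 + 2 * α)) * derivative (pseq α n)
        - (C (2 * α + 1) * X - C (α ^ 2)) * pseq α n

/-- The monic normalization `P_n(x;α) = p_n(x;α) / ((−2)ⁿ (α+1/2)_n)`. -/
noncomputable def Pmonic (α : ℂ) (n : ℕ) : ℂ[X] :=
  ((-2 : ℂ) ^ n * (ascPochhammer ℂ n).eval (α + 1 / 2))⁻¹ • pseq α n

/-- The second-order operator defining the recursion. -/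
noncomputable def Lop (α : ℂ) (p : ℂ[X]) : ℂ[X] :=
  X ^ 2 * derivative (derivative p)
    - X * (2 * X - C (1 + 2 * α)) * derivative p
    - (C (2 * α + 1) * X - C (α ^ 2)) * p

lemma pseq_succ (α : ℂ) (n : ℕ) : pseq α (n + 1) = Lop α (pseq α n) := rfl

lemma Lop_X_mul (α : ℂ) (q : ℂ[X]) : Lop α (X * q) = X * Lop (α + 1) q := by
  simp only [Lop, derivative_mul, derivative_X, one_mul, derivative_add, map_add, map_mul,
    map_one, map_ofNat, C_add, C_mul, C_1, C_pow]
  ring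

lemma Lop_C_mul (α c : ℂ) (q : ℂ[X]) : Lop α (C c * q) = C c * Lop α q := by
  simp only [Lop, derivative_C_mul]
  ring

/-- Key identity: `(2α+1)·x·p_n(x;α+1) = α²·p_n(x;α) − p_{n+1}(x;α)`. -/
lemma key (α : ℂ) : ∀ n : ℕ,
    C (2 * α + 1) * (X * pseq (α + 1) n) = C (α ^ 2) * pseq α n - pseq α (n + 1) := by
  intro n
  induction n with
  | zero =>
    show C (2 * α + 1) * (X * 1) = C (α ^ 2) * 1 - pseq α 1
    simp only [pseq, derivative_one, derivative_zero]
    ring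
  | succ n ih =>
    have h1 : pseq (α + 1) (n + 1) = Lop (α + 1) (pseq (α + 1) n) := rfl
    have h2 : C (2 * α + 1) * (X * pseq (α + 1) (n + 1))
        = Lop α (C (2 * α + 1) * (X * pseq (α + 1) n)) := by
      rw [h1, Lop_C_mul, Lop_X_mul]
    rw [h2, ih]
    have h3 : Lop α (C (α ^ 2) * pseq α n - pseq α (n + 1))
        = C (α ^ 2) * Lop α (pseq α n) - Lop α (pseq α (n + 1)) := by
      have : C (α ^ 2) * pseq α n - pseq α (n + 1)
          = C (α ^ 2) * pseq α n + C (-1) * pseq α (n + 1) := by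
        simp; ring
      rw [this]
      have hadd : ∀ p q : ℂ[X], Lop α (p + q) = Lop α p + Lop α q := by
        intro p q; simp only [Lop, derivative_add]; ring
      rw [hadd, Lop_C_mul, Lop_C_mul]
      simp; ring
    rw [h3, ← pseq_succ, ← pseq_succ]

/-- Leading coefficient data. -/
noncomputable def dd (α : ℂ) (n : ℕ) : ℂ := (-2 : ℂ) ^ n * (ascPochhammer ℂ n).eval (α + 1 / 2)

lemma dd_succ (α : ℂ) (n : ℕ) : dd α (n + 1) = dd α n * (-2 * (α + 1 / 2 + n)) := by
  simp only [dd, ascPochhammer_succ_right, eval_mul, eval_add, eval_X, eval_natCast, pow_succ]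
  ring

lemma pseq_coeffs (α : ℂ) : ∀ n : ℕ,
    (∀ k, n < k → (pseq α n).coeff k = 0) ∧ (pseq α n).coeff n = dd α n := by
  intro n
  induction n with
  | zero =>
    refine ⟨fun k hk => ?_, ?_⟩
    · show (1 : ℂ[X]).coeff k = 0
      rw [coeff_one]
      simp only [ite_eq_right_iff]
      omega
    · simp [pseq, dd]
  | succ n ih =>
    obtain ⟨hz, hc⟩ := ih
    set q := pseq α n with hq
    have hrw : pseq α (n + 1)
        = X * (X * derivative (derivative q)) - 2 * (X * (X * derivative q))
          + C (1 + 2 * α) * (X * derivative q) - C (2 * α + 1) * (X * q) + C (α ^ 2) * q := by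
      show Lop α q = _
      simp only [Lop, map_ofNat]; ring
    -- coefficient helpers
    have hd1 : ∀ k, n ≤ k → (derivative q).coeff k = 0 := by
      intro k hk
      rw [coeff_derivative, hz _ (by omega), zero_mul]
    have hd2 : ∀ k, n ≤ k + 1 → (derivative (derivative q)).coeff k = 0 := by
      intro k hk
      rw [coeff_derivative, hd1 _ (by omega), zero_mul]
    have hXd2 : ∀ k, n ≤ k → (X * (X * derivative (derivative q))).coeff (k + 1) = 0 := by
      intro k hk
      rcases k with _ | k
      · rw [coeff_X_mul, mul_coeff_zero, coeff_X_zero, zero_mul]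
      · rw [coeff_X_mul, coeff_X_mul, hd2 k (by omega)]
    have hcoeff : ∀ j, (pseq α (n + 1)).coeff (j + 1)
        = (X * (X * derivative (derivative q))).coeff (j + 1)
          - 2 * ((X * derivative q).coeff j)
          + (1 + 2 * α) * ((derivative q).coeff j)
          - (2 * α + 1) * (q.coeff j)
          + α ^ 2 * (q.coeff (j + 1)) := by
      intro j
      rw [hrw]
      simp only [coeff_add, coeff_sub, coeff_C_mul, coeff_ofNat_mul, coeff_X_mul]
    constructor
    · intro k hk
      obtain ⟨j, rfl⟩ : ∃ j, k = j + 1 := ⟨k - 1, by omega⟩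
      rw [hcoeff j]
      have hj : n < j := by omega
      rw [hXd2 j (by omega)]
      have hXdq : (X * derivative q).coeff j = 0 := by
        rcases j with _ | j
        · simp [mul_coeff_zero, coeff_X_zero]
        · rw [coeff_X_mul, hd1 j (by omega)]
      rw [hXdq, hd1 j (by omega), hz j hj, hz (j + 1) (by omega)]
      ring
    · rw [hcoeff n]
      rw [hXd2 n (by omega)]
      have hXdq : (X * derivative q).coeff n = n * dd α n := by
        rcases n with _ | m
        · simp [mul_coeff_zero, coeff_X_zero]
        · rw [coeff_X_mul, coeff_derivative, hc]
          push_cast; ring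
      rw [hXdq, hd1 n le_rfl, hz (n + 1) (by omega), hc, dd_succ]
      push_cast; ring

lemma ascPochhammer_eval_ne_zero {β : ℂ} (hβ : 0 < β.re) (n : ℕ) :
    (ascPochhammer ℂ n).eval β ≠ 0 := by
  induction n with
  | zero => simp
  | succ n ih =>
    rw [ascPochhammer_succ_right]
    simp only [eval_mul, eval_add, eval_X, eval_natCast]
    refine mul_ne_zero ih fun h => ?_
    have : (β + n).re = 0 := by rw [h]; simp
    simp only [Complex.add_re, Complex.natCast_re] at this
    have : (0 : ℝ) ≤ (n : ℝ) := Nat.cast_nonneg n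
    linarith [Complex.add_re β n, Complex.natCast_re n]

lemma dd_ne_zero {α : ℂ} (hα : -(1 / 2 : ℝ) < α.re) (n : ℕ) : dd α n ≠ 0 := by
  refine mul_ne_zero (pow_ne_zero _ (by norm_num)) (ascPochhammer_eval_ne_zero ?_ n)
  have : (α + 1 / 2).re = α.re + 1 / 2 := by simp
  rw [this]; linarith

lemma pseq_eq_smul_Pmonic {α : ℂ} (hα : -(1 / 2 : ℝ) < α.re) (n : ℕ) :
    pseq α n = (dd α n) • Pmonic α n := by
  rw [Pmonic, smul_smul]
  show pseq α n = (dd α n * (dd α n)⁻¹) • pseq α n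
  rw [mul_inv_cancel₀ (dd_ne_zero hα n), one_smul]

lemma Pmonic_monic {α : ℂ} (hα : -(1 / 2 : ℝ) < α.re) (n : ℕ) :
    (Pmonic α n).Monic ∧ (Pmonic α n).natDegree = n := by
  obtain ⟨hz, hc⟩ := pseq_coeffs α n
  have hne := dd_ne_zero hα n
  have hcn : (Pmonic α n).coeff n = 1 := by
    rw [Pmonic, coeff_smul]
    show (dd α n)⁻¹ * _ = 1
    rw [hc, inv_mul_cancel₀ hne]
  have hzz : ∀ k, n < k → (Pmonic α n).coeff k = 0 := by
    intro k hk
    rw [Pmonic, coeff_smul, hz k hk, smul_zero]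
  have hdeg : (Pmonic α n).natDegree = n := by
    apply le_antisymm
    · exact natDegree_le_iff_coeff_eq_zero.mpr hzz
    · by_contra h
      push_neg at h
      rw [coeff_eq_zero_of_natDegree_lt h] at hcn
      exact one_ne_zero (α := ℂ) hcn.symm
  exact ⟨by rwa [Monic, leadingCoeff, hdeg], hdeg⟩

lemma Pmonic_span {α : ℂ} (hα : -(1 / 2 : ℝ) < α.re) :
    Submodule.span ℂ (Set.range (Pmonic α)) = ⊤ := by
  rw [Submodule.eq_top_iff']
  intro f
  have : ∀ N : ℕ, ∀ f : ℂ[X], f.natDegree ≤ N →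
      f ∈ Submodule.span ℂ (Set.range (Pmonic α)) := by
    intro N
    induction N with
    | zero =>
      intro f hf
      have : f = C (f.coeff 0) := eq_C_of_natDegree_eq_zero (Nat.le_zero.mp hf)
      rw [this]
      have h0 : Pmonic α 0 = 1 := by
        have hp0 : pseq α 0 = 1 := rfl
        rw [Pmonic, hp0]
        norm_num
      have : C (f.coeff 0) = (f.coeff 0) • Pmonic α 0 := by
        rw [h0, smul_eq_C_mul, mul_one]
      rw [this]
      exact Submodule.smul_mem _ _ (Submodule.subset_span ⟨0, rfl⟩)
    | succ N ihN =>
      intro f hf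
      rcases Nat.lt_or_ge f.natDegree (N + 1) with h | h
      · exact ihN f (by omega)
      have hdeg : f.natDegree = N + 1 := le_antisymm hf h
      have hf0 : f ≠ 0 := fun h0 => by simp [h0] at hdeg
      obtain ⟨hm, hd⟩ := Pmonic_monic hα (N + 1)
      set g := f - C f.leadingCoeff * Pmonic α (N + 1) with hg
      have hgdeg : g.degree < f.degree := by
        apply degree_sub_lt _ hf0
        · rw [leadingCoeff_mul, leadingCoeff_C, hm.leadingCoeff, mul_one]
        · rw [degree_mul, degree_C (by rwa [leadingCoeff_ne_zero]), zero_add,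
            degree_eq_natDegree hm.ne_zero, hd, degree_eq_natDegree hf0, hdeg]
      have hgnat : g.natDegree ≤ N := by
        have := degree_eq_natDegree hf0 ▸ hgdeg
        rcases eq_or_ne g 0 with h0 | h0
        · simp [h0]
        · have := (degree_eq_natDegree h0) ▸ this
          exact_mod_cast Nat.lt_succ_iff.mp (by exact_mod_cast hdeg ▸ this)
      have hgmem := ihN g hgnat
      have : f = g + C f.leadingCoeff * Pmonic α (N + 1) := by rw [hg]; ring
      rw [this]
      exact Submodule.add_mem _ hgmem (by
        rw [← smul_eq_C_mul]
        exact Submodule.smul_mem _ _ (Submodule.subset_span ⟨N + 1, rfl⟩))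
  exact this f.natDegree f le_rfl

theorem stmt17 (α : ℂ) (hα : -(1 / 2 : ℝ) < α.re)
    (u0α : ℂ[X] →ₗ[ℂ] ℂ) (hu0α : ∀ k : ℕ, u0α (Pmonic α k) = if k = 0 then 1 else 0)
    (u0α1 : ℂ[X] →ₗ[ℂ] ℂ)
    (hu0α1 : ∀ k : ℕ, u0α1 (Pmonic (α + 1) k) = if k = 0 then 1 else 0) :
    ∀ f : ℂ[X], u0α (X * f) = α ^ 2 / (2 * α + 1) * u0α1 f := by
  have h2α : (2 * α + 1) ≠ 0 := by
    intro h
    have : (2 * α + 1).re = 0 := by rw [h]; simp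
    simp only [Complex.add_re, Complex.mul_re, Complex.one_re] at this
    have h2 : (2 : ℂ).re = 2 := by norm_num
    have h2i : (2 : ℂ).im = 0 := by norm_num
    rw [h2, h2i] at this
    simp at this
    linarith
  have hα1 : -(1 / 2 : ℝ) < (α + 1).re := by
    simp only [Complex.add_re, Complex.one_re]; linarith
  -- value of u0α on pseq α k
  have hupseq : ∀ k, u0α (pseq α k) = dd α k * (if k = 0 then 1 else 0) := by
    intro k
    rw [pseq_eq_smul_Pmonic hα, map_smul, hu0α k, smul_eq_mul]
  -- the key computation on basis elements
  have hbasis : ∀ n : ℕ, u0α (X * Pmonic (α + 1) n)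
      = α ^ 2 / (2 * α + 1) * u0α1 (Pmonic (α + 1) n) := by
    intro n
    have hXp : X * pseq (α + 1) n
        = (2 * α + 1)⁻¹ • (C (α ^ 2) * pseq α n - pseq α (n + 1)) := by
      rw [← key α n, smul_eq_C_mul, ← mul_assoc, ← C_mul,
        inv_mul_cancel₀ h2α, C_1, one_mul]
    have hXP : X * Pmonic (α + 1) n = ((dd (α + 1) n)⁻¹ * (2 * α + 1)⁻¹)
        • (C (α ^ 2) * pseq α n - pseq α (n + 1)) := by
      rw [Pmonic]
      show X * ((dd (α + 1) n)⁻¹ • pseq (α + 1) n) = _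
      rw [mul_smul_comm, hXp, smul_smul]
    rw [hXP, map_smul, map_sub, hupseq (n + 1)]
    have hC : u0α (C (α ^ 2) * pseq α n) = α ^ 2 * u0α (pseq α n) := by
      rw [← smul_eq_C_mul, map_smul, smul_eq_mul]
    rw [hC, hupseq n, hu0α1 n]
    rcases n with _ | m
    · have hdd0 : dd (α + 1) 0 = 1 := by simp [dd]
      have hdd0' : dd α 0 = 1 := by simp [dd]
      simp only [hdd0, hdd0', if_pos rfl, if_neg (Nat.succ_ne_zero 0)]
      field_simp
      simp only [↓reduceIte, smul_eq_mul, mul_one, mul_zero, sub_zero]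
      field_simp
    · simp only [if_neg (Nat.succ_ne_zero m), if_neg (Nat.succ_ne_zero (m + 1))]
      simp
  -- conclude by linearity and spanning
  intro f
  let L1 : ℂ[X] →ₗ[ℂ] ℂ := u0α ∘ₗ (LinearMap.mulLeft ℂ (X : ℂ[X]))
  let L2 : ℂ[X] →ₗ[ℂ] ℂ := (α ^ 2 / (2 * α + 1)) • u0α1
  have hL : L1 = L2 := by
    apply LinearMap.ext_on (Pmonic_span hα1)
    rintro x ⟨n, rfl⟩
    simpa [L1, L2, LinearMap.mulLeft_apply] using hbasis n
  have := LinearMap.congr_fun hL f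
  simpa [L1, L2, LinearMap.mulLeft_apply] using this
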